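/- Define, for a > 1 and t > 1/a, the functions A(t) = (a²t² − 1)/(2at) and B(t) = ((a²−2)t² − 1)/(2t√(1+t²)), so that h(t) = (n − B(t))/A(t) for a fixed nonnegative integer n. Then A is strictly increasing and positive on (1/a, ∞), and consequently for each fixed a > 1 and n ≥ 0, the unique solution t(h) of n = A(t)h + B(t) is a strictly decreasing function of h on the set where it is defined. -/
import Mathlib


open Real Set

private lemma aux_A_mono (a : ℝ) (ha : 1 < a) :
    StrictMonoOn (fun t : ℝ => (a ^ 2 * t ^ 2 - 1) / (2 * a * t)) (Ioi (1 / a)) := by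
  intro x hx y hy hxy
  have ha0 : 0 < a := lt_trans one_pos ha
  have hx0 : 0 < x := lt_trans (by positivity) hx
  have hy0 : 0 < y := lt_trans (by positivity) hy
  simp only
  rw [div_lt_div_iff₀ (by positivity) (by positivity)]
  nlinarith [mul_pos (sub_pos.mpr hxy) (show 0 < a ^ 2 * x * y + 1 by positivity), ha0]

private lemma aux_A_pos (a : ℝ) (ha : 1 < a) {t : ℝ} (ht : 1 / a < t) :
    0 < (a ^ 2 * t ^ 2 - 1) / (2 * a * t) := by
  have ha0 : 0 < a := lt_trans one_pos ha
  have ht0 : 0 < t := lt_trans (by positivity) ht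
  have h1 : 1 < a * t := by
    rw [div_lt_iff₀ ha0] at ht; linarith [mul_comm t a]
  apply div_pos _ (by positivity)
  nlinarith

private lemma aux_B_mono (a : ℝ) (ha : 1 < a) {x y : ℝ} (hx : 0 < x) (hxy : x < y) :
    ((a ^ 2 - 2) * x ^ 2 - 1) / (2 * x * Real.sqrt (1 + x ^ 2)) <
      ((a ^ 2 - 2) * y ^ 2 - 1) / (2 * y * Real.sqrt (1 + y ^ 2)) := by
  have hy : 0 < y := lt_trans hx hxy
  set sx := Real.sqrt (1 + x ^ 2) with hsxdef
  set sy := Real.sqrt (1 + y ^ 2) with hsydef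
  have hsx : 0 < sx := Real.sqrt_pos.mpr (by positivity)
  have hsy : 0 < sy := Real.sqrt_pos.mpr (by positivity)
  have h1 : sx ^ 2 = 1 + x ^ 2 := Real.sq_sqrt (by positivity)
  have h2 : sy ^ 2 = 1 + y ^ 2 := Real.sq_sqrt (by positivity)
  -- key : x * sy < y * sx
  have hsq : (x * sy) ^ 2 < (y * sx) ^ 2 := by nlinarith
  have hK : 0 < y * sx - x * sy := by
    have := lt_of_pow_lt_pow_left₀ 2 (le_of_lt (mul_pos hy hsx)) hsq
    linarith
  have hbr : 0 < (a ^ 2 - 1) * x * y + sx * sy := by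
    nlinarith [mul_pos (mul_pos (show (0:ℝ) < a ^ 2 - 1 by nlinarith) hx) hy, mul_pos hsx hsy]
  have hnum : ((a ^ 2 - 2) * y ^ 2 - 1) * (x * sx) - ((a ^ 2 - 2) * x ^ 2 - 1) * (y * sy)
      = (y * sx - x * sy) * ((a ^ 2 - 1) * x * y + sx * sy) := by
    linear_combination x * sx * h2 - y * sy * h1
  rw [div_lt_div_iff₀ (by positivity) (by positivity)]
  nlinarith [mul_pos hK hbr, hnum]

/-- `A(t) = (a²t² − 1)/(2at)` is strictly increasing and positive on `(1/a, ∞)`,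
and consequently the unique solution `t(h)` of `n = A(t)h + B(t)` is strictly
decreasing in `h` (where `B(t) = ((a²−2)t² − 1)/(2t√(1+t²))`). -/
theorem A_mono_and_t_antitone (a : ℝ) (n : ℕ) (ha : 1 < a) :
    (StrictMonoOn (fun t : ℝ => (a ^ 2 * t ^ 2 - 1) / (2 * a * t)) (Ioi (1 / a)) ∧
      ∀ t ∈ Ioi (1 / a), 0 < (a ^ 2 * t ^ 2 - 1) / (2 * a * t)) ∧
    ∀ h₁ h₂ t₁ t₂ : ℝ, 0 < h₁ → h₁ < h₂ →
      (1 / a < t₁ ∧ (n : ℝ) = (a ^ 2 * t₁ ^ 2 - 1) / (2 * a * t₁) * h₁ +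
          ((a ^ 2 - 2) * t₁ ^ 2 - 1) / (2 * t₁ * Real.sqrt (1 + t₁ ^ 2))) →
      (1 / a < t₂ ∧ (n : ℝ) = (a ^ 2 * t₂ ^ 2 - 1) / (2 * a * t₂) * h₂ +
          ((a ^ 2 - 2) * t₂ ^ 2 - 1) / (2 * t₂ * Real.sqrt (1 + t₂ ^ 2))) →
      t₂ < t₁ := by
  refine ⟨⟨aux_A_mono a ha, fun t ht => aux_A_pos a ha ht⟩, ?_⟩
  intro h₁ h₂ t₁ t₂ hh₁ hh₁₂ ⟨ht₁, he₁⟩ ⟨ht₂, he₂⟩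
  by_contra hcon
  push_neg at hcon
  have hA₁ : 0 < (a ^ 2 * t₁ ^ 2 - 1) / (2 * a * t₁) := aux_A_pos a ha ht₁
  have hA₂ : 0 < (a ^ 2 * t₂ ^ 2 - 1) / (2 * a * t₂) := aux_A_pos a ha ht₂
  have ht₁0 : 0 < t₁ := lt_trans (by positivity) ht₁
  rcases eq_or_lt_of_le hcon with heq | hlt
  · subst heq
    nlinarith
  · have hAm : (a ^ 2 * t₁ ^ 2 - 1) / (2 * a * t₁) < (a ^ 2 * t₂ ^ 2 - 1) / (2 * a * t₂) :=
      aux_A_mono a ha ht₁ (mem_Ioi.mpr (lt_trans ht₁ hlt)) hlt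
    have hBm := aux_B_mono a ha ht₁0 hlt
    nlinarith
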